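/- In an e-ring, suppose every element of G commutes with every projection and for every g ∈ G there exists a projection p with (1−p)g ≤ 0 ≤ pg. Then G is a lattice-ordered group, with g ∨ h = p(g−h) + h for p chosen so that (1−p)(g−h) ≤ 0 ≤ p(g−h). -/
import Mathlib


/-- An e-ring: an associative unital ring `R` together with a set `E` of effects.
`E⁺` is the additive submonoid generated by `E` (the set of finite sums of effects). -/
structure ERing (R : Type*) [Ring R] where
  E : Set R
  zero_mem : (0:R) ∈ E
  one_mem : (1:R) ∈ E
  compl_mem : ∀ e ∈ E, 1 - e ∈ E
  ax_i : ∀ a ∈ AddSubmonoid.closure E, -a ∈ AddSubmonoid.closure E → a = 0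
  ax_ii : ∀ a ∈ AddSubmonoid.closure E, 1 - a ∈ AddSubmonoid.closure E → a ∈ E
  ax_iii : ∀ a ∈ AddSubmonoid.closure E, ∀ b ∈ AddSubmonoid.closure E,
    a * b = b * a → a * b ∈ AddSubmonoid.closure E
  ax_iv : ∀ a ∈ AddSubmonoid.closure E, ∀ b ∈ AddSubmonoid.closure E,
    a * b * a ∈ AddSubmonoid.closure E
  ax_v : ∀ a ∈ AddSubmonoid.closure E, ∀ b ∈ AddSubmonoid.closure E,
    a * b * a = 0 → a * b = 0 ∧ b * a = 0
  ax_vi : ∀ a ∈ AddSubmonoid.closure E, ∀ b ∈ AddSubmonoid.closure E,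
    (a - b) * (a - b) ∈ AddSubmonoid.closure E

namespace ERing

variable {R : Type*} [Ring R]

/-- The positive cone `E⁺`: all finite sums of effects. -/
def Ep (S : ERing R) : Set R := (AddSubmonoid.closure S.E : Set R)

/-- The directed group `G = E⁺ − E⁺` (as a subset of `R`). -/
def G (S : ERing R) : Set R := {x | ∃ a ∈ S.Ep, ∃ b ∈ S.Ep, x = a - b}

/-- The partial order with positive cone `E⁺`: `g ≤ h` iff `h − g ∈ E⁺`. -/
def le (S : ERing R) (g h : R) : Prop := h - g ∈ S.Ep

/-- The set of projections: idempotent elements of `G`. -/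
def P (S : ERing R) : Set R := {p | p ∈ S.G ∧ p * p = p}

end ERing

theorem stmt19 {R : Type*} [Ring R] (S : ERing R)
    (hcomm : ∀ g ∈ S.G, ∀ p ∈ S.P, g * p = p * g)
    (hproj : ∀ g ∈ S.G, ∃ p ∈ S.P, S.le ((1 - p) * g) 0 ∧ S.le 0 (p * g)) :
    ∀ g ∈ S.G, ∀ h ∈ S.G,
      (∃ s ∈ S.G, S.le g s ∧ S.le h s ∧
        ∀ k ∈ S.G, S.le g k → S.le h k → S.le s k) ∧
      (∃ m ∈ S.G, S.le m g ∧ S.le m h ∧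
        ∀ k ∈ S.G, S.le k g → S.le k h → S.le k m) ∧
      (∀ p ∈ S.P, S.le ((1 - p) * (g - h)) 0 → S.le 0 (p * (g - h)) →
        S.le g (p * (g - h) + h) ∧ S.le h (p * (g - h) + h) ∧
        ∀ k ∈ S.G, S.le g k → S.le h k → S.le (p * (g - h) + h) k) := by

  -- `Ep` members are in `G`
  have hEpG : ∀ a ∈ S.Ep, a ∈ S.G := fun a ha =>
    ⟨a, ha, 0, AddSubmonoid.zero_mem _, (sub_zero a).symm⟩
  have hGsub : ∀ x ∈ S.G, ∀ y ∈ S.G, x - y ∈ S.G := by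
    rintro x ⟨a, ha, b, hb, rfl⟩ y ⟨c, hc, d, hd, rfl⟩
    exact ⟨a + d, AddSubmonoid.add_mem _ ha hd, b + c, AddSubmonoid.add_mem _ hb hc, by abel⟩
  have hGadd : ∀ x ∈ S.G, ∀ y ∈ S.G, x + y ∈ S.G := by
    rintro x ⟨a, ha, b, hb, rfl⟩ y ⟨c, hc, d, hd, rfl⟩
    exact ⟨a + c, AddSubmonoid.add_mem _ ha hc, b + d, AddSubmonoid.add_mem _ hb hd, by abel⟩
  have h1G : (1 : R) ∈ S.G := hEpG 1 (AddSubmonoid.subset_closure S.one_mem)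
  -- projections lie in `Ep`
  have hPEp : ∀ p ∈ S.P, p ∈ S.Ep := by
    rintro p ⟨⟨a, ha, b, hb, rfl⟩, hpp⟩
    have := S.ax_vi a ha b hb
    rwa [hpp] at this
  -- complements of projections are projections
  have hPc : ∀ p ∈ S.P, (1 - p) ∈ S.P := by
    rintro p ⟨hpG, hpp⟩
    refine ⟨hGsub 1 h1G p hpG, ?_⟩
    simp only [mul_sub, sub_mul, mul_one, one_mul, hpp]; abel
  -- multiplication by a projection preserves `Ep`
  have hmul : ∀ p ∈ S.P, ∀ a ∈ S.Ep, p * a ∈ S.Ep := by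
    intro p hp a ha
    have hc := hcomm a (hEpG a ha) p hp
    have h4 := S.ax_iv p (hPEp p hp) a ha
    rwa [show p * a * p = p * a by rw [mul_assoc, hc, ← mul_assoc, hp.2]] at h4
  -- the key sup construction
  have key : ∀ g ∈ S.G, ∀ h ∈ S.G, ∀ p ∈ S.P,
      S.le ((1 - p) * (g - h)) 0 → S.le 0 (p * (g - h)) →
      S.le g (p * (g - h) + h) ∧ S.le h (p * (g - h) + h) ∧
        ∀ k ∈ S.G, S.le g k → S.le h k → S.le (p * (g - h) + h) k := by
    intro g hg h hh p hp hle1 hle2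
    have hd1 : -((1 - p) * (g - h)) ∈ S.Ep := by
      have := hle1; unfold ERing.le at this; rwa [zero_sub] at this
    have hd2 : p * (g - h) ∈ S.Ep := by
      have := hle2; unfold ERing.le at this; rwa [sub_zero] at this
    refine ⟨?_, ?_, ?_⟩
    · show p * (g - h) + h - g ∈ S.Ep
      rwa [show p * (g - h) + h - g = -((1 - p) * (g - h)) by noncomm_ring]
    · show p * (g - h) + h - h ∈ S.Ep
      rwa [add_sub_cancel_right]
    · intro k hk hgk hhk
      show k - (p * (g - h) + h) ∈ S.Ep
      have e1 : p * (k - g) ∈ S.Ep := hmul p hp _ hgk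
      have e2 : (1 - p) * (k - h) ∈ S.Ep := hmul (1 - p) (hPc p hp) _ hhk
      have := AddSubmonoid.add_mem _ e1 e2
      rwa [show p * (k - g) + (1 - p) * (k - h) = k - (p * (g - h) + h) by noncomm_ring] at this
  intro g hg h hh
  obtain ⟨p, hp, hle1, hle2⟩ := hproj (g - h) (hGsub g hg h hh)
  have hd2 : p * (g - h) ∈ S.Ep := by
    have := hle2; unfold ERing.le at this; rwa [sub_zero] at this
  refine ⟨⟨p * (g - h) + h, hGadd _ (hEpG _ hd2) h hh, key g hg h hh p hp hle1 hle2⟩, ?_, ?_⟩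
  · -- infimum: m = g - p*(g-h)
    have hd1 : -((1 - p) * (g - h)) ∈ S.Ep := by
      have := hle1; unfold ERing.le at this; rwa [zero_sub] at this
    refine ⟨g - p * (g - h), hGsub g hg _ (hEpG _ hd2), ?_, ?_, ?_⟩
    · show g - (g - p * (g - h)) ∈ S.Ep
      rwa [sub_sub_cancel]
    · show h - (g - p * (g - h)) ∈ S.Ep
      rwa [show h - (g - p * (g - h)) = -((1 - p) * (g - h)) by noncomm_ring]
    · intro k hk hkg hkh
      show g - p * (g - h) - k ∈ S.Ep
      have e1 : (1 - p) * (g - k) ∈ S.Ep := hmul (1 - p) (hPc p hp) _ hkg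
      have e2 : p * (h - k) ∈ S.Ep := hmul p hp _ hkh
      have := AddSubmonoid.add_mem _ e1 e2
      rwa [show (1 - p) * (g - k) + p * (h - k) = g - p * (g - h) - k by noncomm_ring] at this
  · intro q hq hq1 hq2
    exact key g hg h hh q hq hq1 hq2
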